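/- For every k ≥ 2, writing e_k(w) = Σ_{i=0}^{k-1} B_{k,i}·w^{2^i} in A[w], the coefficients are given by: B_{k,k-1} = 1; B_{k,i} = S_{k-2,k-2-i}(D₂,…,D_{k-1}) + S_{k-2,k-1-i}(D₂,…,D_{k-1}) for 1 ≤ i ≤ k-2; and B_{k,0} = D_{k-1}·D_{k-2}⋯D₂. -/

import Mathlib

noncomputable section

open Polynomial
open scoped Classical

/-- The defining polynomial `Y² + Y + (X³ + X + 1)` over `𝔽₂[X]`,
viewed as a polynomial in `Y` with coefficients in `𝔽₂[X]`. -/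
def curveEq : Polynomial (Polynomial (ZMod 2)) :=
  X ^ 2 + X + C (X ^ 3 + X + 1)

/-- The ring `A = 𝔽₂[X,Y]/(Y² + Y + X³ + X + 1)`. -/
abbrev A : Type := AdjoinRoot curveEq

/-- The image `x` of `X` in `A`. -/
def aX : A := AdjoinRoot.of curveEq (X : Polynomial (ZMod 2))

/-- The image `y` of `Y` in `A`. -/
def aY : A := AdjoinRoot.root curveEq

/-- The bracket `[j]_x = x^{2^j} + x ∈ A`. -/
def brX (j : ℕ) : A := aX ^ 2 ^ j + aX

/-- The monomials `xⁱyʲ` with `j ∈ {0,1}` and `2i + 3j < k`. -/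
def monoSet (k : ℕ) : Finset A :=
  ((Finset.range k ×ˢ Finset.range 2).filter fun p => 2 * p.1 + 3 * p.2 < k).image
    fun p => aX ^ p.1 * aY ^ p.2

/-- `A_{<k}` : the `𝔽₂`-linear span of the monomials `xⁱyʲ` with `j ∈ {0,1}`
and `2i + 3j < k`, realized as the finite set of all subset sums. -/
def Alt (k : ℕ) : Finset A := (monoSet k).powerset.image fun s => s.sum id

/-- `t_k := x^{k/2}` if `k` is even, `t_k := y·x^{(k-3)/2}` if `k` is odd. -/
def tk (k : ℕ) : A := if Even k then aX ^ (k / 2) else aY * aX ^ ((k - 3) / 2)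

/-- `e_k(w) := ∏_{a ∈ A_{<k}} (w + a) ∈ A[w]`. -/
def ePoly (k : ℕ) : Polynomial A := ∏ a ∈ Alt k, (X + C a)

/-- `D_k := e_k(t_k)`, the product of all monic elements of `A` of degree `k`. -/
def Dk (k : ℕ) : A := (ePoly k).eval (tk k)

variable (K : Type) [Field K] [Algebra A K]

/-- The coefficients `a_j = 1/d_j` of the exponential function:
`a₀ = a₁ = 1` and `a_j = ([1]_x·a_{j-1}² + a_{j-2}⁴)/[j]_x` for `j ≥ 2`. -/
def aSeq : ℕ → K
  | 0 => 1
  | 1 => 1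
  | (j + 2) =>
      (algebraMap A K (brX 1) * (aSeq (j + 1)) ^ 2 + (aSeq j) ^ 4) /
        algebraMap A K (brX (j + 2))

/-- The coefficients `b_j = 1/ℓ_j` of the logarithm function:
`b₀ = b₁ = 1` and `b_j = ([1]_x^{2^{j-1}}·b_{j-1} + b_{j-2})/[j]_x` for `j ≥ 2`. -/
def bSeq : ℕ → K
  | 0 => 1
  | 1 => 1
  | (j + 2) =>
      (algebraMap A K (brX 1) ^ 2 ^ (j + 1) * bSeq (j + 1) + bSeq j) /
        algebraMap A K (brX (j + 2))

/-- `p_k(w) := Σ_{j=0}^{k} a_j·b_{k-j}^{2^j}·w^{2^j} ∈ K[w]`. -/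
def pPoly (k : ℕ) : Polynomial K :=
  ∑ j ∈ Finset.range (k + 1), C (aSeq K j * (bSeq K (k - j)) ^ 2 ^ j) * X ^ 2 ^ j

/-- `S_{n,r}(x₁,…,x_n) := Σ_{n ≥ i₁ > i₂ > … > i_r ≥ 1} ∏_{j=1}^{r}
x_{i_j}^{2^{n-j+1-i_j}}`, with `S_{n,0} = 1` and `S_{n,r} = 0` for `r > n`. -/
def Ssum (R : Type*) [CommRing R] (n r : ℕ) (x : ℕ → R) : R :=
  ∑ f ∈ Finset.univ.filter
      (fun f : Fin r → Fin (n + 1) => StrictAnti f ∧ ∀ j, 1 ≤ (f j : ℕ)),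
    ∏ j : Fin r, x (f j) ^ 2 ^ (n - (j : ℕ) - (f j : ℕ))


open scoped symmDiff
lemma curveEq_eq_W : curveEq =
    (WeierstrassCurve.mk (0:ZMod 2) 0 1 1 1).toAffine.polynomial := by
  haveI : CharP (Polynomial (Polynomial (ZMod 2))) 2 := inferInstance
  simp only [curveEq, WeierstrassCurve.Affine.polynomial, sub_eq_add_neg, CharTwo.neg_eq]
  ring_nf
  simp [map_add, map_one, map_pow]
  ring

lemma curveEq_irred : Irreducible curveEq := by
  rw [curveEq_eq_W]
  exact WeierstrassCurve.Affine.irreducible_polynomial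

instance : IsDomain A := by
  show IsDomain (Polynomial (Polynomial (ZMod 2)) ⧸ (Ideal.span {curveEq}))
  rw [Ideal.Quotient.isDomain_iff_prime]
  refine (Ideal.span_singleton_prime curveEq_irred.ne_zero).mpr ?_
  exact (UniqueFactorizationMonoid.irreducible_iff_prime).mp curveEq_irred

lemma curveEq_monic : curveEq.Monic := by
  rw [curveEq_eq_W]; exact WeierstrassCurve.Affine.monic_polynomial

lemma curveEq_degree : curveEq.degree = 2 := by
  rw [curveEq_eq_W]; exact WeierstrassCurve.Affine.degree_polynomial

instance : CharP A 2 := by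
  have h : Function.Injective (AdjoinRoot.of curveEq) :=
    AdjoinRoot.of.injective_of_degree_ne_zero (by rw [curveEq_degree]; decide)
  exact charP_of_injective_ringHom h 2

def mono (p : ℕ × ℕ) : A := aX ^ p.1 * aY ^ p.2

lemma ab_zero (a b : Polynomial (ZMod 2))
    (h : AdjoinRoot.of curveEq a + AdjoinRoot.of curveEq b * aY = 0) : a = 0 ∧ b = 0 := by
  have hmk : AdjoinRoot.mk curveEq (C a + C b * X) = 0 := by
    rw [map_add, map_mul, AdjoinRoot.mk_C, AdjoinRoot.mk_X]
    exact h
  have hdvd : curveEq ∣ C a + C b * X := AdjoinRoot.mk_eq_zero.mp hmk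
  have hz : C a + C b * X = 0 := by
    by_contra hne
    exact curveEq_monic.not_dvd_of_degree_lt hne
      (by
        calc (C a + C b * X).degree ≤ max (C a).degree (C b * X).degree := degree_add_le _ _
        _ ≤ max 0 1 := by
            refine max_le_max degree_C_le ?_
            calc (C b * X).degree ≤ (C b).degree + X.degree := degree_mul_le _ _
            _ ≤ 0 + 1 := by
                refine add_le_add degree_C_le degree_X_le
        _ < 2 := by norm_num
        _ = curveEq.degree := curveEq_degree.symm) hdvd
  constructor
  · have := congrArg (fun q => Polynomial.coeff q 0) hz
    simpa using this
  · have := congrArg (fun q => Polynomial.coeff q 1) hz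
    simpa using this

lemma xpow_sum_inj (S T : Finset ℕ)
    (h : ∑ i ∈ S, (X:Polynomial (ZMod 2)) ^ i = ∑ i ∈ T, (X:Polynomial (ZMod 2)) ^ i) : S = T := by
  ext n
  have := congrArg (fun q => Polynomial.coeff q n) h
  simp only [finset_sum_coeff, coeff_X_pow] at this
  rw [Finset.sum_ite_eq S n (fun _ => (1:ZMod 2)), Finset.sum_ite_eq T n (fun _ => (1:ZMod 2))]
    at this
  by_cases hS : n ∈ S <;> by_cases hT : n ∈ T <;> simp_all

def polf (u : Finset (ℕ × ℕ)) (j : ℕ) : Polynomial (ZMod 2) :=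
  ∑ i ∈ (u.filter fun p => p.2 = j).image Prod.fst, X ^ i

lemma fst_injOn (u : Finset (ℕ × ℕ)) (j : ℕ) :
    Set.InjOn Prod.fst ((u.filter fun p => p.2 = j : Finset (ℕ × ℕ)) : Set (ℕ × ℕ)) := by
  intro p hp q hq hpq
  simp only [Finset.coe_filter, Set.mem_setOf_eq] at hp hq
  exact Prod.ext hpq (hp.2.trans hq.2.symm)

lemma mono_repr (u : Finset (ℕ × ℕ)) (hu : ∀ p ∈ u, p.2 < 2) :
    ∑ p ∈ u, mono p =
      AdjoinRoot.of curveEq (polf u 0) + AdjoinRoot.of curveEq (polf u 1) * aY := by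
  rw [← Finset.sum_filter_add_sum_filter_not u (fun p => p.2 = 0)]
  congr 1
  · rw [polf, map_sum, Finset.sum_image (fun p hp q hq h => fst_injOn u 0 hp hq h)]
    refine Finset.sum_congr rfl fun p hp => ?_
    simp only [Finset.mem_filter] at hp
    simp [mono, hp.2, map_pow, aX]
  · have : u.filter (fun p => ¬ p.2 = 0) = u.filter (fun p => p.2 = 1) := by
      apply Finset.filter_congr
      intro p hp
      have := hu p hp
      omega
    rw [this, polf, map_sum, Finset.sum_mul,
      Finset.sum_image (fun p hp q hq h => fst_injOn u 1 hp hq h)]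
    refine Finset.sum_congr rfl fun p hp => ?_
    simp only [Finset.mem_filter] at hp
    simp [mono, hp.2, map_pow, aX, pow_one]

lemma filter_eq_of_polf (u v : Finset (ℕ × ℕ)) (j : ℕ) (hu : polf u j = polf v j) :
    u.filter (fun p => p.2 = j) = v.filter (fun p => p.2 = j) := by
  have him := xpow_sum_inj _ _ hu
  have key : ∀ w : Finset (ℕ × ℕ),
      w.filter (fun p => p.2 = j) =
        ((w.filter fun p => p.2 = j).image Prod.fst).image (fun i => (i, j)) := by
    intro w
    ext ⟨a, b⟩
    simp only [Finset.mem_image, Finset.mem_filter, Prod.mk.injEq]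
    constructor
    · rintro ⟨hw, rfl⟩
      exact ⟨a, ⟨⟨a, b⟩, ⟨hw, rfl⟩, rfl⟩, rfl, rfl⟩
    · rintro ⟨i, ⟨⟨c, d⟩, ⟨hw, hd⟩, hc⟩, rfl, rfl⟩
      simp only at hc hd
      subst hc; subst hd
      exact ⟨hw, rfl⟩
  rw [key u, key v, him]

lemma sumInj {s t : Finset (ℕ × ℕ)} (hs : ∀ p ∈ s, p.2 < 2) (ht : ∀ p ∈ t, p.2 < 2)
    (h : ∑ p ∈ s, mono p = ∑ p ∈ t, mono p) : s = t := by
  rw [mono_repr s hs, mono_repr t ht] at h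
  have h0 : AdjoinRoot.of curveEq (polf s 0 - polf t 0) +
      AdjoinRoot.of curveEq (polf s 1 - polf t 1) * aY = 0 := by
    rw [map_sub, map_sub]
    linear_combination h
  obtain ⟨e0, e1⟩ := ab_zero _ _ h0
  have p0 : polf s 0 = polf t 0 := sub_eq_zero.mp e0
  have p1 : polf s 1 = polf t 1 := sub_eq_zero.mp e1
  have f0 := filter_eq_of_polf s t 0 p0
  have f1 := filter_eq_of_polf s t 1 p1
  have split : ∀ w : Finset (ℕ × ℕ), (∀ p ∈ w, p.2 < 2) →
      w = w.filter (fun p => p.2 = 0) ∪ w.filter (fun p => p.2 = 1) := by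
    intro w hw
    ext p
    simp only [Finset.mem_union, Finset.mem_filter]
    have := hw p
    constructor
    · intro hp
      have h2 : p.2 = 0 ∨ p.2 = 1 := by have := hw p hp; omega
      rcases h2 with h' | h'
      · exact Or.inl ⟨hp, h'⟩
      · exact Or.inr ⟨hp, h'⟩
    · rintro (⟨hp, _⟩ | ⟨hp, _⟩) <;> exact hp
  rw [split s hs, split t ht, f0, f1]

def pairSet (k : ℕ) : Finset (ℕ × ℕ) :=
  (Finset.range k ×ˢ Finset.range 2).filter fun p => 2 * p.1 + 3 * p.2 < k

lemma monoSet_eq (k : ℕ) : monoSet k = (pairSet k).image mono := rfl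

lemma mem_pairSet {k : ℕ} {p : ℕ × ℕ} :
    p ∈ pairSet k ↔ p.1 < k ∧ p.2 < 2 ∧ 2 * p.1 + 3 * p.2 < k := by
  simp [pairSet, Finset.mem_filter, Finset.mem_product, and_assoc]

lemma pairSet_snd {k : ℕ} {p : ℕ × ℕ} (hp : p ∈ pairSet k) : p.2 < 2 :=
  (mem_pairSet.mp hp).2.1

def newPair (k : ℕ) : ℕ × ℕ := if Even k then (k / 2, 0) else ((k - 3) / 2, 1)

lemma tk_eq_mono (k : ℕ) : mono (newPair k) = tk k := by
  rw [tk, newPair]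
  split_ifs with h
  · simp [mono]
  · simp [mono, mul_comm]

lemma pairSet_succ {k : ℕ} (hk : 2 ≤ k) : pairSet (k + 1) = insert (newPair k) (pairSet k) := by
  ext ⟨a, b⟩
  rw [Finset.mem_insert, mem_pairSet, mem_pairSet, newPair]
  rcases Nat.even_or_odd k with h | h
  · have he : k % 2 = 0 := Nat.even_iff.mp h
    rw [if_pos h, Prod.mk.injEq]
    omega
  · have he : k % 2 = 1 := Nat.odd_iff.mp h
    rw [if_neg (Nat.not_even_iff_odd.mpr h), Prod.mk.injEq]
    omega

lemma newPair_not_mem {k : ℕ} (hk : 2 ≤ k) : newPair k ∉ pairSet k := by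
  rw [newPair]
  rcases Nat.even_or_odd k with h | h
  · have he : k % 2 = 0 := Nat.even_iff.mp h
    rw [if_pos h, mem_pairSet]
    simp only [not_and]
    omega
  · have he : k % 2 = 1 := Nat.odd_iff.mp h
    rw [if_neg (Nat.not_even_iff_odd.mpr h), mem_pairSet]
    simp only [not_and]
    omega

lemma newPair_snd (k : ℕ) : (newPair k).2 < 2 := by
  rw [newPair]; split_ifs <;> simp

lemma mono_inj_pair {p q : ℕ × ℕ} (hp : p.2 < 2) (hq : q.2 < 2) (h : mono p = mono q) :
    p = q := by
  have := sumInj (s := {p}) (t := {q}) (by simpa using hp) (by simpa using hq)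
    (by simpa using h)
  simpa using this

lemma monoSet_succ {k : ℕ} (hk : 2 ≤ k) : monoSet (k + 1) = insert (tk k) (monoSet k) := by
  rw [monoSet_eq, monoSet_eq, pairSet_succ hk, Finset.image_insert, tk_eq_mono]

lemma tk_not_mem_monoSet {k : ℕ} (hk : 2 ≤ k) : tk k ∉ monoSet k := by
  rw [monoSet_eq]
  intro h
  obtain ⟨q, hq, he⟩ := Finset.mem_image.mp h
  have : q = newPair k := mono_inj_pair (pairSet_snd hq) (newPair_snd k) (he.trans (tk_eq_mono k).symm)
  exact newPair_not_mem hk (this ▸ hq)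

lemma card_pairSet {k : ℕ} (hk : 2 ≤ k) : (pairSet k).card = k - 1 := by
  induction k, hk using Nat.le_induction with
  | base => decide
  | succ k hk ih =>
      rw [pairSet_succ hk, Finset.card_insert_of_notMem (newPair_not_mem hk), ih]
      omega

lemma card_monoSet {k : ℕ} (hk : 2 ≤ k) : (monoSet k).card = k - 1 := by
  rw [monoSet_eq, Finset.card_image_of_injOn, card_pairSet hk]
  intro p hp q hq h
  exact mono_inj_pair (pairSet_snd (Finset.mem_coe.mp hp)) (pairSet_snd (Finset.mem_coe.mp hq)) h

lemma subset_repr {k : ℕ} {s : Finset A} (hs : s ⊆ monoSet k) :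
    ∃ u ⊆ pairSet k, s = u.image mono ∧ s.sum id = ∑ p ∈ u, mono p := by
  have himg : s = ((pairSet k).filter (fun p => mono p ∈ s)).image mono := by
    ext a
    simp only [Finset.mem_image, Finset.mem_filter]
    constructor
    · intro ha
      have := hs ha
      rw [monoSet_eq] at this
      obtain ⟨p, hp, he⟩ := Finset.mem_image.mp this
      exact ⟨p, ⟨hp, he ▸ ha⟩, he⟩
    · rintro ⟨p, ⟨_, hp⟩, rfl⟩
      exact hp
  have hinj : Set.InjOn mono ((pairSet k).filter (fun p => mono p ∈ s) : Finset (ℕ × ℕ)) := by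
    intro p hp q hq h
    simp only [Finset.coe_filter, Set.mem_setOf_eq] at hp hq
    exact mono_inj_pair (pairSet_snd hp.1) (pairSet_snd hq.1) h
  refine ⟨(pairSet k).filter (fun p => mono p ∈ s), Finset.filter_subset _ _, himg, ?_⟩
  conv_lhs => rw [himg]
  rw [Finset.sum_image (fun p hp q hq h => hinj hp hq h)]
  rfl

lemma sum_injOn (k : ℕ) :
    Set.InjOn (fun s : Finset A => s.sum id) ((monoSet k).powerset : Finset (Finset A)) := by
  intro s hs t ht h
  simp only [Finset.coe_powerset, Set.mem_preimage, Set.mem_powerset_iff, Finset.coe_subset,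
    Finset.mem_coe] at hs ht
  obtain ⟨u, hu, hui, hus⟩ := subset_repr hs
  obtain ⟨v, hv, hvi, hvs⟩ := subset_repr ht
  have : u = v := by
    refine sumInj (fun p hp => pairSet_snd (hu hp)) (fun p hp => pairSet_snd (hv hp)) ?_
    rw [← hus, ← hvs]
    exact h
  rw [hui, hvi, this]

lemma card_Alt {k : ℕ} (hk : 2 ≤ k) : (Alt k).card = 2 ^ (k - 1) := by
  rw [Alt, Finset.card_image_of_injOn (sum_injOn k), Finset.card_powerset, card_monoSet hk]

lemma mem_Alt_iff {k : ℕ} {a : A} : a ∈ Alt k ↔ ∃ s ⊆ monoSet k, a = s.sum id := by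
  simp [Alt, Finset.mem_image, Finset.mem_powerset, eq_comm]

lemma zero_mem_Alt (k : ℕ) : (0 : A) ∈ Alt k :=
  mem_Alt_iff.mpr ⟨∅, Finset.empty_subset _, by simp⟩

lemma add_mem_Alt {k : ℕ} {a b : A} (ha : a ∈ Alt k) (hb : b ∈ Alt k) : a + b ∈ Alt k := by
  obtain ⟨s, hs, rfl⟩ := mem_Alt_iff.mp ha
  obtain ⟨t, ht, rfl⟩ := mem_Alt_iff.mp hb
  refine mem_Alt_iff.mpr ⟨s ∆ t, ?_, ?_⟩
  · refine subset_trans (le_of_le_of_eq symmDiff_le_sup rfl) (Finset.union_subset hs ht)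
  · have h1 : (s ∆ t).sum id + (s ∩ t).sum id = (s ∪ t).sum id := by
      have hd : Disjoint (s ∆ t) (s ∩ t) := disjoint_symmDiff_inf s t
      rw [← Finset.sum_union hd]
      congr 1
      simpa using symmDiff_sup_inf (a := s) (b := t)
    have h2 : (s ∪ t).sum id + (s ∩ t).sum id = s.sum id + t.sum id :=
      Finset.sum_union_inter
    have h3 : ∀ c : A, c + c = 0 := fun c => CharTwo.add_self_eq_zero c
    calc s.sum id + t.sum id = (s ∆ t).sum id + ((s ∩ t).sum id + (s ∩ t).sum id) := by
          rw [← add_assoc, h1, h2]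
    _ = (s ∆ t).sum id := by rw [h3, add_zero]

lemma tk_not_mem_Alt {k : ℕ} (hk : 2 ≤ k) : tk k ∉ Alt k := by
  intro h
  obtain ⟨s, hs, he⟩ := mem_Alt_iff.mp h
  obtain ⟨u, hu, -, hsum⟩ := subset_repr hs
  have : ({newPair k} : Finset (ℕ × ℕ)) = u := by
    refine sumInj (by simpa using newPair_snd k) (fun p hp => pairSet_snd (hu hp)) ?_
    rw [Finset.sum_singleton, tk_eq_mono, ← hsum, ← he]
  have : newPair k ∈ pairSet k := hu (this ▸ Finset.mem_singleton_self _)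
  exact newPair_not_mem hk this

lemma Alt_succ {k : ℕ} (hk : 2 ≤ k) :
    Alt (k + 1) = Alt k ∪ (Alt k).image (fun a => tk k + a) := by
  classical
  simp only [Alt, monoSet_succ hk, Finset.powerset_insert, Finset.image_union,
    Finset.image_image]
  congr 1
  refine Finset.image_congr ?_
  intro s hs
  simp only [Finset.mem_coe, Finset.mem_powerset] at hs
  simp only [Function.comp_apply]
  rw [Finset.sum_insert (fun h => tk_not_mem_monoSet hk (hs h))]
  rfl

lemma Alt_disjoint {k : ℕ} (hk : 2 ≤ k) :
    Disjoint (Alt k) ((Alt k).image (fun a => tk k + a)) := by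
  rw [Finset.disjoint_left]
  intro c hc hc'
  obtain ⟨a, ha, rfl⟩ := Finset.mem_image.mp hc'
  have : tk k ∈ Alt k := by
    have h1 := add_mem_Alt hc ha
    have : tk k + a + a = tk k := by
      rw [add_assoc, CharTwo.add_self_eq_zero, add_zero]
    rwa [this] at h1
  exact tk_not_mem_Alt hk this

lemma ePoly_monic (k : ℕ) : (ePoly k).Monic :=
  monic_prod_of_monic _ _ fun a _ => monic_X_add_C a

lemma ePoly_natDegree (k : ℕ) : (ePoly k).natDegree = (Alt k).card := by
  rw [ePoly, natDegree_prod _ _ (fun a _ => X_add_C_ne_zero a)]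
  simp [natDegree_X_add_C]

lemma ePoly_eval_root {k : ℕ} {a : A} (ha : a ∈ Alt k) : (ePoly k).eval a = 0 := by
  rw [ePoly, eval_prod]
  refine Finset.prod_eq_zero ha ?_
  simp [CharTwo.add_self_eq_zero]

lemma Dk_eq_prod (k : ℕ) : Dk k = ∏ b ∈ Alt k, (tk k + b) := by
  rw [Dk, ePoly, eval_prod]
  simp

lemma eval_shift {k : ℕ} {a : A} (ha : a ∈ Alt k) (c : A) :
    (ePoly k).eval (c + a) = (ePoly k).eval c := by
  rw [ePoly, eval_prod, eval_prod]
  simp only [eval_add, eval_X, eval_C]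
  refine Finset.prod_nbij' (fun b => a + b) (fun b => a + b) ?_ ?_ ?_ ?_ ?_
  · intro b hb; exact add_mem_Alt ha hb
  · intro b hb; exact add_mem_Alt ha hb
  · intro b _; show a + (a + b) = b; rw [← add_assoc, CharTwo.add_self_eq_zero, zero_add]
  · intro b _; show a + (a + b) = b; rw [← add_assoc, CharTwo.add_self_eq_zero, zero_add]
  · intro b _; show c + a + b = c + (a + b); rw [add_assoc]

lemma ePoly_comp_add {k : ℕ} (hk : 2 ≤ k) :
    (ePoly k).comp (X + C (tk k)) = ePoly k + C (Dk k) := by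
  have hcard : (Alt k).card = 2 ^ (k - 1) := card_Alt hk
  have hdeg : (ePoly k).natDegree = 2 ^ (k - 1) := by rw [ePoly_natDegree, hcard]
  have hcomp_monic : ((ePoly k).comp (X + C (tk k))).Monic :=
    (ePoly_monic k).comp_X_add_C _
  have hcompdeg : ((ePoly k).comp (X + C (tk k))).natDegree = 2 ^ (k - 1) := by
    rw [natDegree_comp, natDegree_X_add_C, mul_one, hdeg]
  set f := (ePoly k).comp (X + C (tk k)) + ePoly k + C (Dk k) with hf
  have heval : ∀ a ∈ Alt k, f.eval a = 0 := by
    intro a ha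
    rw [hf, eval_add, eval_add, eval_C, eval_comp, eval_add, eval_X, eval_C,
      add_comm a (tk k), eval_shift ha (tk k), ePoly_eval_root ha, ← Dk]
    rw [add_zero, CharTwo.add_self_eq_zero]
  have hfz : f = 0 := by
    by_cases h0 : f = 0
    · exact h0
    refine Polynomial.eq_zero_of_natDegree_lt_card_of_eval_eq_zero' f (Alt k) heval ?_
    rw [hcard]
    have hdlt : f.degree < ((2 ^ (k - 1) : ℕ) : WithBot ℕ) := by
      rw [degree_lt_iff_coeff_zero]
      intro m hm
      have hm' : 2 ^ (k - 1) ≤ m := Nat.cast_le.mp hm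
      rcases eq_or_lt_of_le hm' with he | hlt
      · rw [hf, coeff_add, coeff_add]
        have h1 : ((ePoly k).comp (X + C (tk k))).coeff m = 1 := by
          rw [← he, ← hcompdeg]; exact hcomp_monic.coeff_natDegree
        have h2 : (ePoly k).coeff m = 1 := by
          rw [← he, ← hdeg]; exact (ePoly_monic k).coeff_natDegree
        have h3 : (C (Dk k)).coeff m = 0 := by
          rw [coeff_C, if_neg]
          rw [← he]
          exact pow_ne_zero _ two_ne_zero
        rw [h1, h2, h3, add_zero, CharTwo.add_self_eq_zero]
      · rw [hf, coeff_add, coeff_add,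
          coeff_eq_zero_of_natDegree_lt (by rw [hcompdeg]; exact hlt),
          coeff_eq_zero_of_natDegree_lt (by rw [hdeg]; exact hlt), coeff_C, if_neg]
        · simp
        · have : 0 < 2 ^ (k - 1) := by positivity
          omega
    exact (Polynomial.natDegree_lt_iff_degree_lt (n := 2 ^ (k - 1)) h0).mpr hdlt
  have hthis : (ePoly k).comp (X + C (tk k)) + ePoly k + C (Dk k) = 0 := hfz
  have h2 : (2 : Polynomial A) = 0 := by
    have := CharP.cast_eq_zero (Polynomial A) 2
    exact_mod_cast this
  linear_combination hthis - (ePoly k + C (Dk k)) * h2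

lemma ePoly_succ {k : ℕ} (hk : 2 ≤ k) :
    ePoly (k + 1) = ePoly k ^ 2 + C (Dk k) * ePoly k := by
  have h1 : ePoly (k + 1) = ePoly k * ∏ a ∈ Alt k, (X + C (tk k + a)) := by
    rw [ePoly, Alt_succ hk, Finset.prod_union (Alt_disjoint hk), ← ePoly,
      Finset.prod_image]
    intro a ha b hb h
    have := add_left_cancel h
    exact this
  have h2 : ∏ a ∈ Alt k, (X + C (tk k + a)) = (ePoly k).comp (X + C (tk k)) := by
    rw [ePoly, Polynomial.comp, Polynomial.eval₂_finset_prod]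
    refine Finset.prod_congr rfl fun a _ => ?_
    simp [map_add, add_assoc]
  rw [h1, h2, ePoly_comp_add hk]
  ring

lemma Ssum_r_zero (R : Type*) [CommRing R] (n : ℕ) (x : ℕ → R) : Ssum R n 0 x = 1 := by
  rw [Ssum]
  have h : (Finset.univ.filter
      (fun f : Fin 0 → Fin (n + 1) => StrictAnti f ∧ ∀ j, 1 ≤ (f j : ℕ))) = Finset.univ := by
    rw [Finset.filter_eq_self]
    intro f _
    exact ⟨fun a => a.elim0, fun j => j.elim0⟩
  rw [h]
  simp

lemma Ssum_n_zero (R : Type*) [CommRing R] (r : ℕ) (x : ℕ → R) : Ssum R 0 (r + 1) x = 0 := by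
  rw [Ssum]
  have h : (Finset.univ.filter
      (fun f : Fin (r + 1) → Fin 1 => StrictAnti f ∧ ∀ j, 1 ≤ (f j : ℕ))) = ∅ := by
    rw [Finset.filter_eq_empty_iff]
    rintro f - ⟨-, h2⟩
    have := h2 0
    have : (f 0 : ℕ) < 1 := (f 0).isLt
    omega
  rw [h, Finset.sum_empty]

lemma sa_bound {r N : ℕ} {f : Fin r → Fin N} (hf : StrictAnti f) (j : Fin r) :
    (f j : ℕ) + (j : ℕ) ≤ (f ⟨0, Nat.lt_of_le_of_lt (Nat.zero_le _) j.isLt⟩ : ℕ) := by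
  obtain ⟨m, hm⟩ := j
  induction m with
  | zero => simp
  | succ m ih =>
      have h1 : f ⟨m + 1, hm⟩ < f ⟨m, by omega⟩ := hf (by simp [Fin.lt_def])
      have h2 := ih (by omega)
      simp only [Fin.lt_def] at h1
      simp only at h2 ⊢
      omega

lemma Ssum_rec (n r : ℕ) (x : ℕ → A) :
    Ssum A (n + 1) (r + 1) x = (Ssum A n (r + 1) x) ^ 2 + x (n + 1) * Ssum A n r x := by
  rw [Ssum, ← Finset.sum_filter_add_sum_filter_not _ (fun f => f 0 ≠ Fin.last (n + 1))]
  congr 1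
  -- part 1 : f 0 ≠ last, gives the square
  · have hsq : (Ssum A n (r + 1) x) ^ 2 =
        ∑ g ∈ Finset.univ.filter
          (fun g : Fin (r + 1) → Fin (n + 1) => StrictAnti g ∧ ∀ j, 1 ≤ (g j : ℕ)),
          ∏ j : Fin (r + 1), x (g j) ^ (2 ^ (n - (j : ℕ) - (g j : ℕ)) * 2) := by
      rw [Ssum, CharTwo.sum_sq]
      refine Finset.sum_congr rfl fun g _ => ?_
      rw [← Finset.prod_pow]
      refine Finset.prod_congr rfl fun j _ => ?_
      rw [← pow_mul]
    rw [hsq]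
    refine Finset.sum_nbij'
      (fun f (j : Fin (r + 1)) => (⟨min (f j : ℕ) n, by omega⟩ : Fin (n + 1)))
      (fun g (j : Fin (r + 1)) => (g j).castSucc) ?_ ?_ ?_ ?_ ?_
    · intro f hf
      simp only [Finset.mem_filter, Finset.mem_univ, true_and] at hf ⊢
      obtain ⟨⟨hanti, hge⟩, hne⟩ := hf
      have hle : ∀ j, (f j : ℕ) ≤ n := by
        intro j
        have h0 : (f 0 : ℕ) ≤ n := by
          have : (f 0 : ℕ) ≠ n + 1 := fun h => hne (Fin.ext h)
          have := (f 0).isLt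
          omega
        rcases eq_or_ne j 0 with rfl | hj
        · exact h0
        · have : f j < f 0 := hanti (Fin.pos_iff_ne_zero.mpr hj)
          simp only [Fin.lt_def] at this
          omega
      constructor
      · intro a b hab
        have h1 := hanti hab
        simp only [Fin.lt_def] at h1
        have h2 := hle a; have h3 := hle b
        show min (f b : ℕ) n < min (f a : ℕ) n
        omega
      · intro j
        have h1 := hge j
        have h2 := hle j
        show 1 ≤ min (f j : ℕ) n
        omega
    · intro g hg
      simp only [Finset.mem_filter, Finset.mem_univ, true_and] at hg ⊢
      obtain ⟨hanti, hge⟩ := hg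
      refine ⟨⟨?_, ?_⟩, ?_⟩
      · intro a b hab
        simp only [Fin.lt_def, Fin.coe_castSucc]
        have := hanti hab
        simp only [Fin.lt_def] at this
        exact this
      · intro j
        exact hge j
      · intro h
        have := congrArg (fun z : Fin (n + 2) => (z : ℕ)) h
        simp only [Fin.coe_castSucc, Fin.val_last] at this
        have := (g 0).isLt
        omega
    · intro f hf
      simp only [Finset.mem_filter, Finset.mem_univ, true_and] at hf
      obtain ⟨⟨hanti, hge⟩, hne⟩ := hf
      funext j
      have hle : ∀ j, (f j : ℕ) ≤ n := by
        intro j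
        have h0 : (f 0 : ℕ) ≤ n := by
          have : (f 0 : ℕ) ≠ n + 1 := fun h => hne (Fin.ext h)
          have := (f 0).isLt
          omega
        rcases eq_or_ne j 0 with rfl | hj
        · exact h0
        · have : f j < f 0 := hanti (Fin.pos_iff_ne_zero.mpr hj)
          simp only [Fin.lt_def] at this
          omega
      apply Fin.ext
      simp [Nat.min_eq_left (hle j)]
    · intro g hg
      funext j
      apply Fin.ext
      have := (g j).isLt
      show min ((g j).castSucc : ℕ) n = (g j : ℕ)
      rw [Fin.coe_castSucc]
      omega
    · intro f hf
      simp only [Finset.mem_filter, Finset.mem_univ, true_and] at hf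
      obtain ⟨⟨hanti, hge⟩, hne⟩ := hf
      have hle : ∀ j, (f j : ℕ) ≤ n := by
        intro j
        have h0 : (f 0 : ℕ) ≤ n := by
          have : (f 0 : ℕ) ≠ n + 1 := fun h => hne (Fin.ext h)
          have := (f 0).isLt
          omega
        rcases eq_or_ne j 0 with rfl | hj
        · exact h0
        · have : f j < f 0 := hanti (Fin.pos_iff_ne_zero.mpr hj)
          simp only [Fin.lt_def] at this
          omega
      refine Finset.prod_congr rfl fun j _ => ?_
      have hmin : min (f j : ℕ) n = (f j : ℕ) := Nat.min_eq_left (hle j)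
      have hbound : (f j : ℕ) + (j : ℕ) ≤ n := by
        have hsa := sa_bound hanti j
        have h0 := hle ⟨0, Nat.lt_of_le_of_lt (Nat.zero_le _) j.isLt⟩
        omega
      have hexp : (n + 1) - (j : ℕ) - (f j : ℕ) = (n - (j : ℕ) - (f j : ℕ)) + 1 := by
        omega
      simp only [hmin, hexp, pow_succ]
  -- part 2 : f 0 = last, gives x (n+1) * Ssum n r
  · have hmul : x (n + 1) * Ssum A n r x =
        ∑ g ∈ Finset.univ.filter
          (fun g : Fin r → Fin (n + 1) => StrictAnti g ∧ ∀ j, 1 ≤ (g j : ℕ)),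
          x (n + 1) * ∏ j : Fin r, x (g j) ^ 2 ^ (n - (j : ℕ) - (g j : ℕ)) := by
      rw [Ssum, Finset.mul_sum]
    rw [hmul]
    refine Finset.sum_nbij'
      (fun f (j : Fin r) => (⟨min (f j.succ : ℕ) n, by omega⟩ : Fin (n + 1)))
      (fun g => Fin.cons (Fin.last (n + 1)) (fun j => (g j).castSucc)) ?_ ?_ ?_ ?_ ?_
    · intro f hf
      simp only [Finset.mem_filter, Finset.mem_univ, true_and, not_not] at hf ⊢
      obtain ⟨⟨hanti, hge⟩, h0⟩ := hf
      have hle : ∀ j : Fin r, (f j.succ : ℕ) ≤ n := by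
        intro j
        have : f j.succ < f 0 := hanti (Fin.succ_pos j)
        simp only [Fin.lt_def, h0, Fin.val_last] at this
        omega
      constructor
      · intro a b hab
        have h1 : f b.succ < f a.succ := hanti (Fin.succ_lt_succ_iff.mpr hab)
        simp only [Fin.lt_def] at h1
        have h2 := hle a; have h3 := hle b
        show min (f b.succ : ℕ) n < min (f a.succ : ℕ) n
        omega
      · intro j
        have h1 := hge j.succ
        have h2 := hle j
        show 1 ≤ min (f j.succ : ℕ) n
        omega
    · intro g hg
      simp only [Finset.mem_filter, Finset.mem_univ, true_and, not_not] at hg ⊢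
      obtain ⟨hanti, hge⟩ := hg
      refine ⟨⟨?_, ?_⟩, ?_⟩
      · intro a b hab
        rcases Fin.eq_zero_or_eq_succ a with rfl | ⟨a', rfl⟩
        · rcases Fin.eq_zero_or_eq_succ b with rfl | ⟨b', rfl⟩
          · exact absurd hab (lt_irrefl _)
          · simp only [Fin.cons_zero, Fin.cons_succ]
            exact Fin.castSucc_lt_last _
        · rcases Fin.eq_zero_or_eq_succ b with rfl | ⟨b', rfl⟩
          · exact absurd hab (Fin.not_lt_zero _)
          · simp only [Fin.cons_succ]
            exact Fin.castSucc_lt_castSucc_iff.mpr (hanti (Fin.succ_lt_succ_iff.mp hab))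
      · intro j
        rcases Fin.eq_zero_or_eq_succ j with rfl | ⟨j', rfl⟩
        · simp
        · simp only [Fin.cons_succ]
          exact hge j'
      · simp
    · intro f hf
      simp only [Finset.mem_filter, Finset.mem_univ, true_and, not_not] at hf
      obtain ⟨⟨hanti, hge⟩, h0⟩ := hf
      have hle : ∀ j : Fin r, (f j.succ : ℕ) ≤ n := by
        intro j
        have : f j.succ < f 0 := hanti (Fin.succ_pos j)
        simp only [Fin.lt_def, h0, Fin.val_last] at this
        omega
      funext i
      rcases Fin.eq_zero_or_eq_succ i with rfl | ⟨j, rfl⟩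
      · simp [Fin.cons_zero, h0]
      · simp only [Fin.cons_succ]
        apply Fin.ext
        show min (f j.succ : ℕ) n = (f j.succ : ℕ)
        have := hle j
        omega
    · intro g hg
      funext j
      apply Fin.ext
      have := (g j).isLt
      show min ((g j).castSucc : ℕ) n = (g j : ℕ)
      rw [Fin.coe_castSucc]
      omega
    · intro f hf
      simp only [Finset.mem_filter, Finset.mem_univ, true_and, not_not] at hf
      obtain ⟨⟨hanti, hge⟩, h0⟩ := hf
      have hle : ∀ j : Fin r, (f j.succ : ℕ) ≤ n := by
        intro j
        have : f j.succ < f 0 := hanti (Fin.succ_pos j)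
        simp only [Fin.lt_def, h0, Fin.val_last] at this
        omega
      rw [Fin.prod_univ_succ]
      congr 1
      · rw [h0]
        simp
      · refine Finset.prod_congr rfl fun j _ => ?_
        have hmin : min (f j.succ : ℕ) n = (f j.succ : ℕ) := Nat.min_eq_left (hle j)
        have hexp : (n + 1) - ((j.succ : Fin (r+1)) : ℕ) - (f j.succ : ℕ) =
            n - (j : ℕ) - (f j.succ : ℕ) := by
          simp only [Fin.val_succ]
          omega
        simp only [hmin, hexp]

lemma Ssum_gt (x : ℕ → A) : ∀ {n r : ℕ}, n < r → Ssum A n r x = 0 := by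
  intro n
  induction n with
  | zero =>
      intro r h
      obtain ⟨r', rfl⟩ : ∃ r', r = r' + 1 := ⟨r - 1, by omega⟩
      exact Ssum_n_zero A r' x
  | succ n ih =>
      intro r h
      obtain ⟨r', rfl⟩ : ∃ r', r = r' + 1 := ⟨r - 1, by omega⟩
      rw [Ssum_rec, ih (by omega), ih (by omega : n < r')]
      ring

lemma Ssum_full (x : ℕ → A) : ∀ n : ℕ, Ssum A n n x = ∏ m ∈ Finset.Icc 1 n, x m := by
  intro n
  induction n with
  | zero => rw [Ssum_r_zero]; simp
  | succ n ih =>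
      rw [Ssum_rec, ih, Ssum_gt x (by omega), Finset.prod_Icc_succ_top (by omega)]
      ring

def Df : ℕ → A := fun m => Dk (m + 1)

def Bc (k i : ℕ) : A :=
  if i = k - 1 then 1 else Ssum A (k - 2) (k - 2 - i) Df + Ssum A (k - 2) (k - 1 - i) Df

lemma Bc_eq {k i : ℕ} (hi : i ≠ k - 1) :
    Bc k i = Ssum A (k - 2) (k - 2 - i) Df + Ssum A (k - 2) (k - 1 - i) Df := if_neg hi

lemma BcRec {k : ℕ} (hk : 2 ≤ k) (i : ℕ) (hi : i ≤ k) :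
    Bc (k + 1) i = (if i = 0 then 0 else Bc k (i - 1) ^ 2) +
      (if i = k then 0 else Dk k * Bc k i) := by
  obtain ⟨n, rfl⟩ : ∃ n, k = n + 2 := ⟨k - 2, by omega⟩
  have hc : ∀ a b : A, (a + b) ^ 2 = a ^ 2 + b ^ 2 := fun a b => CharTwo.add_sq a b
  have hDf : Df (n + 1) = Dk (n + 2) := rfl
  rcases eq_or_ne i 0 with rfl | hi0
  · rw [if_pos rfl, if_neg (by omega), zero_add, Bc_eq (by omega), Bc_eq (by omega)]
    simp only [show n + 2 + 1 - 2 = n + 1 from by omega, show n + 2 + 1 - 1 = n + 2 from by omega,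
      show n + 2 - 2 = n from by omega, show n + 2 - 1 = n + 1 from by omega, Nat.sub_zero]
    rw [Ssum_rec n n Df, Ssum_gt Df (by omega : n < n + 1),
      Ssum_gt Df (by omega : n + 1 < n + 2), hDf]
    ring
  · rcases eq_or_ne i (n + 2) with rfl | hik
    · rw [if_neg hi0, if_pos rfl, add_zero,
        show Bc (n + 2 + 1) (n + 2) = 1 from if_pos (by omega),
        show Bc (n + 2) (n + 2 - 1) = 1 from if_pos rfl]
      norm_num
    · rcases eq_or_ne i (n + 1) with rfl | hik1
      · rw [if_neg hi0, if_neg hik, Bc_eq (by omega), Bc_eq (by omega),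
          show Bc (n + 2) (n + 1) = 1 from if_pos (by omega)]
        simp only [show n + 2 + 1 - 2 = n + 1 from by omega,
          show n + 2 + 1 - 1 = n + 2 from by omega,
          show n + 2 - 2 = n from by omega, show n + 2 - 1 = n + 1 from by omega,
          show n + 1 - (n + 1) = 0 from by omega, show n + 2 - (n + 1) = 1 from by omega,
          show n + 1 - 1 = n from by omega, show n - n = 0 from by omega,
          show n + 1 - n = 1 from by omega]
        rw [show (1 : ℕ) = 0 + 1 from rfl, Ssum_rec n 0 Df, Ssum_r_zero, Ssum_r_zero, hc, hDf]
        ring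
      · rw [if_neg hi0, if_neg hik, Bc_eq (by omega), Bc_eq (by omega), Bc_eq (by omega)]
        simp only [show n + 2 + 1 - 2 = n + 1 from by omega,
          show n + 2 + 1 - 1 = n + 2 from by omega,
          show n + 2 - 2 = n from by omega, show n + 2 - 1 = n + 1 from by omega]
        have s1 : n + 2 - i = (n + 1 - i) + 1 := by omega
        have s2 : n + 1 - i = (n - i) + 1 := by omega
        have s3 : n - (i - 1) = (n - i) + 1 := by omega
        have s4 : n + 1 - (i - 1) = (n + 1 - i) + 1 := by omega
        rw [s3, s4, s1, s2, Ssum_rec, Ssum_rec, hc, hDf]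
        ring

-- Part 6
lemma pairSet_two : pairSet 2 = {((0 : ℕ), (0 : ℕ))} := by decide

lemma monoSet_two : monoSet 2 = {(1 : A)} := by
  rw [monoSet_eq, pairSet_two]
  simp [mono]

lemma Alt_two : Alt 2 = {(0 : A), 1} := by
  classical
  rw [Alt, monoSet_two, show ({(1 : A)} : Finset A) = insert (1 : A) ∅ from rfl,
    Finset.powerset_insert, Finset.powerset_empty]
  simp only [Finset.image_union, Finset.image_singleton, Finset.sum_empty, Finset.sum_singleton]
  ext a
  simp [or_comm]

lemma ePoly_two : ePoly 2 = X ^ 2 + X := by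
  rw [ePoly, Alt_two, Finset.prod_insert (by simp), Finset.prod_singleton]
  simp only [map_zero, map_one, add_zero]
  ring

lemma main_eq : ∀ k : ℕ, 2 ≤ k → ePoly k = ∑ i ∈ Finset.range k, C (Bc k i) * X ^ (2 ^ i) := by
  intro k hk
  induction k, hk using Nat.le_induction with
  | base =>
      rw [ePoly_two, Finset.sum_range_succ, Finset.sum_range_one]
      rw [show Bc 2 1 = 1 from if_pos rfl,
        show Bc 2 0 = 1 from by
          rw [Bc_eq (by omega)]
          simp only [show (2 : ℕ) - 2 = 0 from rfl, show (2 : ℕ) - 1 = 1 from rfl, Nat.sub_zero]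
          rw [Ssum_r_zero, show Ssum A 0 1 Df = 0 from Ssum_n_zero A 0 Df, add_zero]]
      norm_num
      ring
  | succ k hk ih =>
      rw [ePoly_succ hk, ih]
      have hBc : ∀ i ∈ Finset.range (k + 1),
          C (Bc (k + 1) i) * X ^ (2 ^ i) =
            (if i = 0 then 0 else C (Bc k (i - 1) ^ 2) * X ^ (2 ^ i)) +
            (if i = k then 0 else C (Dk k * Bc k i) * X ^ (2 ^ i)) := by
        intro i hi
        rw [BcRec hk i (by simp at hi; omega), map_add]
        split_ifs with h1 h2 h3
        · simp
        · simp [add_mul]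
        · simp [add_mul]
        · simp [add_mul]
      rw [Finset.sum_congr rfl hBc, Finset.sum_add_distrib]
      congr 1
      · rw [Finset.sum_range_succ' _ k, if_pos rfl, add_zero]
        rw [CharTwo.sum_sq]
        refine Finset.sum_congr rfl fun i hi => ?_
        rw [if_neg (by omega), Nat.add_sub_cancel, mul_pow, ← map_pow, ← pow_mul, ← pow_succ]
      · rw [Finset.sum_range_succ, if_pos rfl, add_zero, Finset.mul_sum]
        refine Finset.sum_congr rfl fun i hi => ?_
        simp only [Finset.mem_range] at hi
        rw [if_neg (by omega), map_mul, mul_assoc]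

lemma coeff_main {k : ℕ} (hk : 2 ≤ k) {m : ℕ} (hm : m < k) :
    (ePoly k).coeff (2 ^ m) = Bc k m := by
  rw [main_eq k hk, finset_sum_coeff]
  simp only [coeff_C_mul, coeff_X_pow]
  rw [Finset.sum_eq_single_of_mem m (Finset.mem_range.mpr hm)]
  · rw [if_pos rfl, mul_one]
  · intro i _ hne
    rw [if_neg, mul_zero]
    intro h
    exact hne (Nat.pow_right_injective (le_refl 2) h).symm


/-- For `k ≥ 2`, writing `e_k(w) = Σ_{i=0}^{k-1} B_{k,i}·w^{2^i}` in `A[w]`,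
the coefficients are `B_{k,k-1} = 1`;
`B_{k,i} = S_{k-2,k-2-i}(D₂,…,D_{k-1}) + S_{k-2,k-1-i}(D₂,…,D_{k-1})` for
`1 ≤ i ≤ k-2`; and `B_{k,0} = D_{k-1}·D_{k-2}⋯D₂`. -/
theorem stmt14 (k : ℕ) (hk : 2 ≤ k) :
    (ePoly k).coeff (2 ^ (k - 1)) = 1 ∧
    (∀ i : ℕ, 1 ≤ i → i ≤ k - 2 →
      (ePoly k).coeff (2 ^ i) =
        Ssum A (k - 2) (k - 2 - i) (fun m => Dk (m + 1)) +
          Ssum A (k - 2) (k - 1 - i) (fun m => Dk (m + 1))) ∧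
    (ePoly k).coeff 1 = ∏ j ∈ Finset.Icc 2 (k - 1), Dk j := by
  refine ⟨?_, ?_, ?_⟩
  · rw [coeff_main hk (by omega : k - 1 < k)]
    exact if_pos rfl
  · intro i h1 h2
    rw [coeff_main hk (by omega : i < k), Bc_eq (by omega)]
    rfl
  · conv_lhs => rw [show (1 : ℕ) = 2 ^ 0 from by norm_num]
    rw [coeff_main hk (by omega : 0 < k), Bc_eq (by omega)]
    simp only [Nat.sub_zero]
    rw [show k - 1 = (k - 2) + 1 from by omega,
      Ssum_gt Df (show k - 2 < k - 2 + 1 from by omega), add_zero, Ssum_full]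
    refine Finset.prod_nbij' (fun m => m + 1) (fun m => m - 1) ?_ ?_ ?_ ?_ ?_
    · intro a ha; simp only [Finset.mem_Icc] at ha ⊢; omega
    · intro a ha; simp only [Finset.mem_Icc] at ha ⊢; omega
    · intro a ha; show a + 1 - 1 = a; omega
    · intro a ha; simp only [Finset.mem_Icc] at ha; show a - 1 + 1 = a; omega
    · intro a _; rfl
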